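/- arXiv:1406.0434 — 2 statements merged into one kernel-verified Lean document; each statement's English description precedes it below -/
import Mathlib

section
/- Let N ≥ 2 and m ≥ 1. The extremal stretching factor of φ_{N,m} equals m+1: sup_{w ∈ F_N, w ≠ 1} ‖φ_{N,m}(w)‖_A / ‖w‖_A = m+1. In particular ‖φ_{N,m}(w)‖_A ≤ (m+1)·‖w‖_A for every w ∈ F_N, and the ratio m+1 is attained at w = a_1. -/
/-- The reduced word length of an element of the free group on `Fin N`,
with respect to the standard free basis. -/
noncomputable def wlen {N : ℕ} (w : FreeGroup (Fin N)) : ℕ := w.toWord.length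

/-- The cyclically reduced length of `w`: the minimal word length over the
standard basis among all conjugates of `w`. -/
noncomputable def cyclen {N : ℕ} (w : FreeGroup (Fin N)) : ℕ :=
  sInf (Set.range fun g : FreeGroup (Fin N) => wlen (g * w * g⁻¹))

/-- The extremal stretching factor of a map of the free group on `Fin N`:
the supremum over nontrivial `w` of `‖φ w‖_A / ‖w‖_A`. -/
noncomputable def LambdaA {N : ℕ} (φ : FreeGroup (Fin N) → FreeGroup (Fin N)) : ℝ :=
  ⨆ w : {w : FreeGroup (Fin N) // w ≠ 1}, (cyclen (φ w.1) : ℝ) / (cyclen w.1 : ℝ)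

lemma wlen_eq_norm {N : ℕ} (w : FreeGroup (Fin N)) : wlen w = FreeGroup.norm w := rfl

lemma mk_single_false {N : ℕ} (x : Fin N) :
    FreeGroup.mk [(x, false)] = (FreeGroup.of x)⁻¹ := by
  rw [FreeGroup.of, FreeGroup.inv_mk]; rfl

/-- Generic letter-wise bound: if a function `μ ∘ χ` is subadditive letter-by-letter
bounded by `c`, then `μ (χ w) ≤ c * wlen w`. -/
lemma key_bound {N c : ℕ} {G : Type*} [Group G] (χ : FreeGroup (Fin N) →* G)
    (μ : G → ℕ) (hμ1 : μ 1 = 0) (hμmul : ∀ a b, μ (a * b) ≤ μ a + μ b)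
    (hgen : ∀ x : Fin N, ∀ b : Bool, μ (χ (FreeGroup.mk [(x, b)])) ≤ c)
    (w : FreeGroup (Fin N)) : μ (χ w) ≤ c * wlen w := by
  have hL : ∀ L : List (Fin N × Bool), μ (χ (FreeGroup.mk L)) ≤ c * L.length := by
    intro L
    induction L with
    | nil =>
        have : FreeGroup.mk ([] : List (Fin N × Bool)) = 1 := rfl
        simp [this, hμ1]
    | cons p L ih =>
        have hsplit : FreeGroup.mk (p :: L) = FreeGroup.mk [p] * FreeGroup.mk L := by
          rw [FreeGroup.mul_mk]; rfl
        rw [hsplit, map_mul]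
        calc μ (χ (FreeGroup.mk [p]) * χ (FreeGroup.mk L))
            ≤ μ (χ (FreeGroup.mk [p])) + μ (χ (FreeGroup.mk L)) := hμmul _ _
          _ ≤ c + c * L.length := Nat.add_le_add (hgen p.1 p.2) ih
          _ = c * (p :: L).length := by simp [List.length_cons]; ring
  have := hL w.toWord
  rwa [FreeGroup.mk_toWord] at this

lemma cyclen_le_wlen {N : ℕ} (w : FreeGroup (Fin N)) : cyclen w ≤ wlen w := by
  have h : cyclen w ≤ wlen ((1 : FreeGroup (Fin N)) * w * 1⁻¹) := Nat.sInf_le ⟨1, rfl⟩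
  simpa using h

lemma one_le_cyclen {N : ℕ} {w : FreeGroup (Fin N)} (hw : w ≠ 1) : 1 ≤ cyclen w := by
  apply le_csInf (Set.range_nonempty _)
  rintro n ⟨g, rfl⟩
  show 1 ≤ wlen (g * w * g⁻¹)
  have h1 : g * w * g⁻¹ ≠ 1 := by
    intro h
    apply hw
    have := congrArg (fun x => g⁻¹ * x * g) h
    simpa [mul_assoc] using this
  have := (FreeGroup.norm_eq_zero (x := g * w * g⁻¹)).not.mpr h1
  rw [wlen_eq_norm]; omega

/-- The abelianized (1st,2nd)-coordinate counting hom. -/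
noncomputable def psi (N : ℕ) : FreeGroup (Fin N) →* Multiplicative (ℤ × ℤ) :=
  FreeGroup.lift fun i => Multiplicative.ofAdd
    (if (i : ℕ) = 0 then ((1 : ℤ), (0 : ℤ)) else if (i : ℕ) = 1 then (0, 1) else 0)

/-- ℓ¹ size on `Multiplicative (ℤ × ℤ)`. -/
def nu (z : Multiplicative (ℤ × ℤ)) : ℕ :=
  (Multiplicative.toAdd z).1.natAbs + (Multiplicative.toAdd z).2.natAbs

lemma nu_one : nu (1 : Multiplicative (ℤ × ℤ)) = 0 := rfl

lemma nu_mul (a b : Multiplicative (ℤ × ℤ)) : nu (a * b) ≤ nu a + nu b := by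
  simp only [nu, toAdd_mul, Prod.fst_add, Prod.snd_add]
  have h1 := Int.natAbs_add_le (Multiplicative.toAdd a).1 (Multiplicative.toAdd b).1
  have h2 := Int.natAbs_add_le (Multiplicative.toAdd a).2 (Multiplicative.toAdd b).2
  omega

lemma nu_inv (a : Multiplicative (ℤ × ℤ)) : nu a⁻¹ = nu a := by
  simp [nu]

lemma nu_psi_le {N : ℕ} (w : FreeGroup (Fin N)) : nu (psi N w) ≤ wlen w := by
  have := key_bound (c := 1) (psi N) nu nu_one nu_mul ?_ w
  · simpa using this
  · intro x b
    cases b with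
    | true =>
        show nu (psi N (FreeGroup.of x)) ≤ 1
        rw [psi, FreeGroup.lift_apply_of]
        rcases eq_or_ne (x : ℕ) 0 with h | h
        · simp [nu, h]
        rcases eq_or_ne (x : ℕ) 1 with h1 | h1
        · simp [nu, h, h1]
        · simp [nu, h, h1]
    | false =>
        rw [mk_single_false, map_inv, nu_inv]
        rw [psi, FreeGroup.lift_apply_of]
        rcases eq_or_ne (x : ℕ) 0 with h | h
        · simp [nu, h]
        rcases eq_or_ne (x : ℕ) 1 with h1 | h1
        · simp [nu, h, h1]
        · simp [nu, h, h1]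

lemma psi_conj {N : ℕ} (g w : FreeGroup (Fin N)) : psi N (g * w * g⁻¹) = psi N w := by
  rw [map_mul, map_mul, map_inv, mul_comm (psi N g), mul_assoc, mul_inv_cancel, mul_one]

lemma psi_target {N m : ℕ} (hN : 2 ≤ N) (hm : 1 ≤ m) :
    psi N (FreeGroup.of ⟨0, by linarith⟩ * FreeGroup.of ⟨1, by linarith⟩ ^ m) =
      Multiplicative.ofAdd ((1 : ℤ), (m : ℤ)) := by
  rw [map_mul, map_pow, psi, FreeGroup.lift_apply_of, FreeGroup.lift_apply_of]
  norm_num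
  rw [← ofAdd_nsmul, ← ofAdd_add]
  congr 1
  simp [Prod.ext_iff]

lemma cyclen_target {N m : ℕ} (hN : 2 ≤ N) (hm : 1 ≤ m) :
    cyclen (FreeGroup.of (⟨0, by linarith⟩ : Fin N) * FreeGroup.of ⟨1, by linarith⟩ ^ m) = m + 1 := by
  set w := FreeGroup.of (⟨0, by omega⟩ : Fin N) * FreeGroup.of (⟨1, by omega⟩ : Fin N) ^ m with hw
  apply le_antisymm
  · calc cyclen w ≤ wlen w := cyclen_le_wlen w
      _ ≤ wlen (FreeGroup.of (⟨0, by omega⟩ : Fin N)) +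
          wlen (FreeGroup.of (⟨1, by omega⟩ : Fin N) ^ m) := FreeGroup.norm_mul_le _ _
      _ = 1 + m := by
          rw [wlen_eq_norm, wlen_eq_norm, FreeGroup.norm_of, FreeGroup.norm_of_pow]
      _ = m + 1 := Nat.add_comm 1 m
  · apply le_csInf (Set.range_nonempty _)
    rintro n ⟨g, rfl⟩
    show m + 1 ≤ wlen (g * w * g⁻¹)
    have h1 : nu (psi N (g * w * g⁻¹)) = m + 1 := by
      rw [psi_conj, hw, psi_target hN hm]
      simp [nu]
      omega
    have h2 := nu_psi_le (g * w * g⁻¹)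
    omega

lemma cyclen_of {N : ℕ} (i : Fin N) : cyclen (FreeGroup.of i) = 1 := by
  apply le_antisymm
  · have := cyclen_le_wlen (FreeGroup.of i)
    rwa [wlen_eq_norm, FreeGroup.norm_of] at this
  · apply one_le_cyclen
    intro h
    have := congrArg FreeGroup.norm h
    rw [FreeGroup.norm_of, FreeGroup.norm_one] at this
    omega

lemma wlen_phi_le {N m : ℕ} (hN : 2 ≤ N)
    (φ : FreeGroup (Fin N) →* FreeGroup (Fin N))
    (hφ1 : φ (FreeGroup.of ⟨0, by linarith⟩) =
      FreeGroup.of ⟨0, by linarith⟩ * FreeGroup.of ⟨1, by linarith⟩ ^ m)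
    (hφ2 : ∀ i : Fin N, i ≠ ⟨0, by linarith⟩ → φ (FreeGroup.of i) = FreeGroup.of i)
    (w : FreeGroup (Fin N)) : wlen (φ w) ≤ (m + 1) * wlen w := by
  apply key_bound (c := m + 1) φ wlen
    (by rw [wlen_eq_norm, FreeGroup.norm_one])
    (fun a b => FreeGroup.norm_mul_le a b)
  intro x b
  have hsingle : wlen (φ (FreeGroup.of x)) ≤ m + 1 := by
    rcases eq_or_ne x (⟨0, by omega⟩ : Fin N) with h | h
    · subst h
      rw [hφ1]
      have h2 := FreeGroup.norm_mul_le (FreeGroup.of (⟨0, by omega⟩ : Fin N))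
        (FreeGroup.of (⟨1, by omega⟩ : Fin N) ^ m)
      rw [FreeGroup.norm_of, FreeGroup.norm_of_pow] at h2
      exact h2.trans (by omega)
    · rw [hφ2 x h, wlen_eq_norm, FreeGroup.norm_of]; omega
  cases b with
  | true => exact hsingle
  | false =>
      rw [mk_single_false, map_inv, wlen_eq_norm, FreeGroup.norm_inv_eq]
      exact hsingle

lemma cyclen_phi_le {N m : ℕ} (hN : 2 ≤ N)
    (φ : FreeGroup (Fin N) →* FreeGroup (Fin N))
    (hφ1 : φ (FreeGroup.of ⟨0, by linarith⟩) =
      FreeGroup.of ⟨0, by linarith⟩ * FreeGroup.of ⟨1, by linarith⟩ ^ m)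
    (hφ2 : ∀ i : Fin N, i ≠ ⟨0, by linarith⟩ → φ (FreeGroup.of i) = FreeGroup.of i)
    (w : FreeGroup (Fin N)) : cyclen (φ w) ≤ (m + 1) * cyclen w := by
  obtain ⟨g, hg⟩ := Nat.sInf_mem
    (Set.range_nonempty fun g : FreeGroup (Fin N) => wlen (g * w * g⁻¹))
  have hg' : wlen (g * w * g⁻¹) = cyclen w := hg
  calc cyclen (φ w) ≤ wlen (φ g * φ w * (φ g)⁻¹) := Nat.sInf_le ⟨φ g, rfl⟩
    _ = wlen (φ (g * w * g⁻¹)) := by rw [map_mul, map_mul, map_inv]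
    _ ≤ (m + 1) * wlen (g * w * g⁻¹) := wlen_phi_le hN φ hφ1 hφ2 _
    _ = (m + 1) * cyclen w := by rw [hg']

/-- for `φ = φ_{N,m}` (given by `a₁ ↦ a₁ a₂^m`, `aᵢ ↦ aᵢ` for `i ≥ 2`),
the extremal stretching factor equals `m + 1`; in particular
`‖φ w‖_A ≤ (m+1)‖w‖_A` for all `w`, and the ratio `m+1` is attained at `a₁`. -/
theorem stmt0 (N m : ℕ) (hN : 2 ≤ N) (hm : 1 ≤ m)
    (φ : FreeGroup (Fin N) →* FreeGroup (Fin N))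
    (hφ1 : φ (FreeGroup.of ⟨0, by omega⟩) =
      FreeGroup.of ⟨0, by omega⟩ * FreeGroup.of ⟨1, by omega⟩ ^ m)
    (hφ2 : ∀ i : Fin N, i ≠ ⟨0, by omega⟩ → φ (FreeGroup.of i) = FreeGroup.of i) :
    LambdaA (fun w => φ w) = m + 1 ∧
    (∀ w : FreeGroup (Fin N), cyclen (φ w) ≤ (m + 1) * cyclen w) ∧
    (cyclen (φ (FreeGroup.of ⟨0, by omega⟩)) : ℝ) /
      (cyclen (FreeGroup.of (⟨0, by omega⟩ : Fin N)) : ℝ) = m + 1 := by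
  have hne : (FreeGroup.of (⟨0, by omega⟩ : Fin N)) ≠ 1 := by
    intro h
    have := congrArg FreeGroup.norm h
    rw [FreeGroup.norm_of, FreeGroup.norm_one] at this
    omega
  have hupper := cyclen_phi_le hN φ hφ1 hφ2
  have hratio : (cyclen (φ (FreeGroup.of ⟨0, by omega⟩)) : ℝ) /
      (cyclen (FreeGroup.of (⟨0, by omega⟩ : Fin N)) : ℝ) = m + 1 := by
    rw [hφ1, cyclen_target hN hm, cyclen_of]
    push_cast
    ring
  refine ⟨?_, hupper, hratio⟩
  haveI : Nonempty {w : FreeGroup (Fin N) // w ≠ 1} := ⟨⟨_, hne⟩⟩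
  have hbdd : ∀ w : {w : FreeGroup (Fin N) // w ≠ 1},
      (cyclen ((fun w => φ w) w.1) : ℝ) / (cyclen w.1 : ℝ) ≤ m + 1 := by
    rintro ⟨w, hw⟩
    have h1 : (0 : ℝ) < (cyclen w : ℝ) := by
      have := one_le_cyclen hw
      exact_mod_cast Nat.lt_of_lt_of_le Nat.zero_lt_one this
    rw [div_le_iff₀ h1]
    have : (cyclen (φ w) : ℝ) ≤ ((m + 1) * cyclen w : ℕ) := by exact_mod_cast hupper w
    push_cast at this
    linarith
  apply le_antisymm
  · exact ciSup_le hbdd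
  · have hle := le_ciSup (f := fun w : {w : FreeGroup (Fin N) // w ≠ 1} =>
        (cyclen ((fun w => φ w) w.1) : ℝ) / (cyclen w.1 : ℝ))
      ⟨(m : ℝ) + 1, Set.forall_mem_range.mpr hbdd⟩
      ⟨FreeGroup.of ⟨0, by omega⟩, hne⟩
    rw [LambdaA]
    simp only at hle
    rw [hratio] at hle
    exact hle
end

section
/- For each N ≥ 2 define ρ_N := inf over all automorphisms φ of F_N of λ_A(φ)/Λ_A(φ). Then ρ_N ≤ 2/(N+1) for every N ≥ 2; consequently lim_{N→∞} ρ_N = 0 and limsup_{N→∞} N·ρ_N < ∞, i.e., ρ_N = O(1/N). -/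
/-- The average of `‖φ w‖_A` over the sphere of radius `n`, divided by `n`. -/
noncomputable def avg (N : ℕ) (φ : FreeGroup (Fin N) → FreeGroup (Fin N)) (n : ℕ) : ℝ :=
  (∑' w : {w : FreeGroup (Fin N) // wlen w = n}, (cyclen (φ w.1) : ℝ)) /
    ((n : ℝ) * ((2 * N * (2 * N - 1) ^ (n - 1) : ℕ) : ℝ))

/-- The generic stretching factor `λ_A(φ) = limsup_n avg_n(φ)`. -/
noncomputable def lamA (N : ℕ) (φ : FreeGroup (Fin N) → FreeGroup (Fin N)) : ℝ :=
  Filter.limsup (avg N φ) Filter.atTop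

/-- `ρ_N`: the infimum over all automorphisms `φ` of `F_N` of `λ_A(φ)/Λ_A(φ)`. -/
noncomputable def rho (N : ℕ) : ℝ :=
  ⨅ φ : MulAut (FreeGroup (Fin N)), lamA N (fun w => φ w) / LambdaA (fun w => φ w)

namespace S11

open FreeGroup

/-! ### Basic facts about `wlen` and `cyclen` -/

variable {N : ℕ}

lemma wlen_mul_le (x y : FreeGroup (Fin N)) : wlen (x*y) ≤ wlen x + wlen y := norm_mul_le x y
lemma wlen_inv (x : FreeGroup (Fin N)) : wlen x⁻¹ = wlen x := norm_inv_eq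
lemma wlen_of (a : Fin N) : wlen (of a) = 1 := norm_of a
lemma wlen_eq_zero {w : FreeGroup (Fin N)} : wlen w = 0 ↔ w = 1 := norm_eq_zero

lemma cyclen_le (w g : FreeGroup (Fin N)) : cyclen w ≤ wlen (g * w * g⁻¹) :=
  Nat.sInf_le ⟨g, rfl⟩

lemma cyclen_le_wlen (w : FreeGroup (Fin N)) : cyclen w ≤ wlen w := by
  simpa using cyclen_le w 1

lemma exists_cyclen (w : FreeGroup (Fin N)) : ∃ g, cyclen w = wlen (g * w * g⁻¹) := by
  have h : (Set.range fun g : FreeGroup (Fin N) => wlen (g * w * g⁻¹)).Nonempty := ⟨_, ⟨1, rfl⟩⟩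
  obtain ⟨g, hg⟩ := Nat.sInf_mem h
  exact ⟨g, hg.symm⟩

lemma one_le_cyclen {w : FreeGroup (Fin N)} (hw : w ≠ 1) : 1 ≤ cyclen w := by
  obtain ⟨g, hg⟩ := exists_cyclen w
  rw [hg, Nat.one_le_iff_ne_zero]
  rw [Ne, wlen_eq_zero]
  intro h
  apply hw
  have : g⁻¹ * (g * w * g⁻¹) * g = w := by group
  rw [h] at this; simpa using this.symm

lemma cyclen_conj (h w : FreeGroup (Fin N)) : cyclen (h * w * h⁻¹) = cyclen w := by
  unfold cyclen
  congr 1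
  ext n
  constructor
  · rintro ⟨g, rfl⟩
    exact ⟨g * h, by group⟩
  · rintro ⟨g, rfl⟩
    exact ⟨g * h⁻¹, by group⟩

lemma cyclen_one_of (a : Fin N) : cyclen (of a) = 1 :=
  le_antisymm (by simpa [wlen_of] using cyclen_le_wlen (of a)) (one_le_cyclen (of_ne_one a))

/-- per-letter cost bound for homomorphisms, list version -/
lemma wlen_hom_le_list (ψ : FreeGroup (Fin N) →* FreeGroup (Fin N)) (l : List (Fin N × Bool)) :
    wlen (ψ (mk l)) ≤ (l.map fun x => wlen (ψ (of x.1))).sum := by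
  induction l with
  | nil => simp [show (mk ([] : List (Fin N × Bool))) = 1 from rfl,
      show wlen (1 : FreeGroup (Fin N)) = 0 from norm_one]
  | cons x t ih =>
    have hsplit : mk (x :: t) = mk [x] * mk t := by
      rw [show x :: t = [x] ++ t from rfl, ← FreeGroup.mul_mk]
    have hx : wlen (ψ (mk [x])) ≤ wlen (ψ (of x.1)) := by
      rcases x with ⟨a, b⟩
      cases b
      · have : mk [(a, false)] = (of a)⁻¹ := by
          rw [show (of a : FreeGroup (Fin N)) = mk [(a, true)] from rfl, FreeGroup.inv_mk]; rfl
        rw [this, _root_.map_inv, wlen_inv]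
      · rfl
    calc wlen (ψ (mk (x :: t))) = wlen (ψ (mk [x]) * ψ (mk t)) := by rw [hsplit, _root_.map_mul]
      _ ≤ wlen (ψ (mk [x])) + wlen (ψ (mk t)) := wlen_mul_le _ _
      _ ≤ _ := by simpa using Nat.add_le_add hx ih

lemma wlen_hom_le (ψ : FreeGroup (Fin N) →* FreeGroup (Fin N)) {C : ℕ}
    (hC : ∀ a, wlen (ψ (of a)) ≤ C) (w : FreeGroup (Fin N)) :
    wlen (ψ w) ≤ C * wlen w := by
  have h := wlen_hom_le_list ψ w.toWord
  rw [FreeGroup.mk_toWord] at h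
  refine h.trans ?_
  have h2 : (w.toWord.map fun x => wlen (ψ (of x.1))).sum ≤ (w.toWord.map fun _ => C).sum := by
    apply List.sum_le_sum
    intro x _
    exact hC _
  simpa [List.map_const', mul_comm, wlen] using h2

lemma cyclen_hom_le (ψ : FreeGroup (Fin N) →* FreeGroup (Fin N)) {C : ℕ}
    (hC : ∀ a, wlen (ψ (of a)) ≤ C) (w : FreeGroup (Fin N)) :
    cyclen (ψ w) ≤ C * cyclen w := by
  obtain ⟨g, hg⟩ := exists_cyclen w
  calc cyclen (ψ w) = cyclen (ψ g * ψ w * (ψ g)⁻¹) := (cyclen_conj _ _).symm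
    _ = cyclen (ψ (g * w * g⁻¹)) := by rw [_root_.map_mul, _root_.map_mul, _root_.map_inv]
    _ ≤ wlen (ψ (g * w * g⁻¹)) := cyclen_le_wlen _
    _ ≤ C * wlen (g * w * g⁻¹) := wlen_hom_le ψ hC _
    _ = C * cyclen w := by rw [hg]

/-- exponent-sum homomorphism -/
noncomputable def hexp (N : ℕ) : FreeGroup (Fin N) →* Multiplicative ℤ :=
  FreeGroup.lift (fun _ => Multiplicative.ofAdd (1:ℤ))

lemma hexp_conj (g w : FreeGroup (Fin N)) : hexp N (g * w * g⁻¹) = hexp N w := by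
  simp [_root_.map_mul, _root_.map_inv, mul_comm]

lemma abs_hexp_le (w : FreeGroup (Fin N)) : |(hexp N w).toAdd| ≤ (wlen w : ℤ) := by
  conv_lhs => rw [← FreeGroup.mk_toWord (x := w)]
  rw [show wlen w = w.toWord.length from rfl]
  generalize w.toWord = l
  induction l with
  | nil => simp [hexp, show (mk ([] : List (Fin N × Bool))) = 1 from rfl]
  | cons x t ih =>
    have hsplit : mk (x :: t) = mk [x] * mk t := by
      rw [show x :: t = [x] ++ t from rfl, ← FreeGroup.mul_mk]
    rw [hsplit, _root_.map_mul]
    have hx : |(hexp N (mk [x])).toAdd| ≤ 1 := by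
      rcases x with ⟨a, b⟩
      cases b
      · have : mk [(a, false)] = (of a)⁻¹ := by
          rw [show (of a : FreeGroup (Fin N)) = mk [(a, true)] from rfl, FreeGroup.inv_mk]; rfl
        simp [this, hexp]
      · simp [show mk [(a, true)] = (of a : FreeGroup (Fin N)) from rfl, hexp]
    calc |(hexp N (mk [x]) * hexp N (mk t)).toAdd|
        ≤ |(hexp N (mk [x])).toAdd| + |(hexp N (mk t)).toAdd| := by
          simpa using abs_add_le _ _
      _ ≤ 1 + (t.length : ℤ) := add_le_add hx ih
      _ = ((x :: t).length : ℤ) := by simp [add_comm]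

lemma le_cyclen_hexp (w : FreeGroup (Fin N)) : |(hexp N w).toAdd| ≤ (cyclen w : ℤ) := by
  obtain ⟨g, hg⟩ := exists_cyclen w
  rw [hg, ← hexp_conj g w]
  exact abs_hexp_le _

/-! ### Counting reduced words -/

variable {M : ℕ}

abbrev LL (M : ℕ) := Fin (M+2) × Bool

def inv2 (x : LL M) : LL M := (x.1, !x.2)

lemma inv2_inv2 (x : LL M) : inv2 (inv2 x) = x := by simp [inv2]

def valid (t : List (LL M)) : Finset (LL M) :=
  Finset.univ.filter fun x => t.head? ≠ some (inv2 x)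

def sphF (M : ℕ) : ℕ → Finset (List (LL M))
  | 0 => {[]}
  | n+1 => (sphF M n).biUnion fun t => (valid t).image fun x => x :: t

def good (x y : LL M) : Prop := y ≠ inv2 x

lemma mem_valid {t : List (LL M)} {x : LL M} :
    x ∈ valid t ↔ ∀ y ∈ t.head?, good x y := by
  simp only [valid, Finset.mem_filter, Finset.mem_univ, true_and]
  cases t <;> simp [good, eq_comm]

lemma mem_sphF {n : ℕ} {l : List (LL M)} :
    l ∈ sphF M n ↔ l.length = n ∧ l.Chain' good := by
  induction n generalizing l with
  | zero => simp [sphF, List.length_eq_zero_iff]; rintro rfl; simp [List.Chain']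
  | succ n ih =>
    simp only [sphF, Finset.mem_biUnion, Finset.mem_image]
    constructor
    · rintro ⟨t, ht, x, hx, rfl⟩
      obtain ⟨hlen, hch⟩ := ih.mp ht
      exact ⟨by simp [hlen], List.isChain_cons.mpr ⟨mem_valid.mp hx, hch⟩⟩
    · rintro ⟨hlen, hch⟩
      cases l with
      | nil => simp at hlen
      | cons x t =>
        obtain ⟨h1, h2⟩ := List.isChain_cons.mp hch
        exact ⟨t, ih.mpr ⟨by simpa using hlen, h2⟩, x, mem_valid.mpr h1, rfl⟩

lemma sum_sphF_succ (n : ℕ) (f : List (LL M) → ℕ) :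
    ∑ l ∈ sphF M (n+1), f l = ∑ t ∈ sphF M n, ∑ x ∈ valid t, f (x :: t) := by
  rw [sphF, Finset.sum_biUnion]
  · apply Finset.sum_congr rfl
    intro t _
    rw [Finset.sum_image]
    intro a _ b _ h
    exact (List.cons.injEq _ _ _ _ ▸ h).1
  · intro t₁ h₁ t₂ h₂ hne
    apply Finset.disjoint_left.mpr
    intro a ha₁ ha₂
    obtain ⟨x, -, rfl⟩ := Finset.mem_image.mp ha₁
    obtain ⟨y, -, heq⟩ := Finset.mem_image.mp ha₂
    exact hne ((List.cons.injEq _ _ _ _ ▸ heq).2.symm)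

lemma card_valid_of_ne_nil {t : List (LL M)} (h : t ≠ []) : (valid t).card = 2*M+3 := by
  obtain ⟨y, t', rfl⟩ := List.exists_cons_of_ne_nil h
  have : valid (y :: t') = Finset.univ.erase (inv2 y) := by
    ext x
    simp only [valid, Finset.mem_filter, Finset.mem_univ, true_and, Finset.mem_erase, and_true,
      List.head?_cons, ne_eq, Option.some.injEq]
    constructor
    · intro hxy hc; exact hxy (by rw [hc, inv2_inv2])
    · intro hxy hc; subst hc; exact hxy (inv2_inv2 x).symm
  rw [this, Finset.card_erase_of_mem (Finset.mem_univ _)]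
  simp [Fintype.card_prod]
  omega

def cnt0 (x : LL M) : ℕ := if x.1 = 0 then 1 else 0

def hd0 : List (LL M) → ℕ
  | [] => 0
  | x :: _ => cnt0 x

def wt (l : List (LL M)) : ℕ := (l.map cnt0).sum

lemma wt_cons (x : LL M) (t : List (LL M)) : wt (x :: t) = cnt0 x + wt t := rfl

lemma pair_filter : (Finset.univ.filter fun x : LL M => x.1 = 0) =
    {((0 : Fin (M+2)), true), ((0 : Fin (M+2)), false)} := by
  ext ⟨a, b⟩
  simp only [Finset.mem_filter, Finset.mem_univ, true_and, Finset.mem_insert, Finset.mem_singleton,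
    Prod.mk.injEq]
  cases b <;> simp

lemma sum_cnt0_valid {t : List (LL M)} (h : t ≠ []) :
    (∑ x ∈ valid t, cnt0 x) + hd0 t = 2 := by
  obtain ⟨y, t', rfl⟩ := List.exists_cons_of_ne_nil h
  have hval : valid (y :: t') = Finset.univ.erase (inv2 y) := by
    ext x
    simp only [valid, Finset.mem_filter, Finset.mem_univ, true_and, Finset.mem_erase, and_true,
      List.head?_cons, ne_eq, Option.some.injEq]
    constructor
    · intro hxy hc; exact hxy (by rw [hc, inv2_inv2])
    · intro hxy hc; subst hc; exact hxy (inv2_inv2 x).symm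
  have hsum : (∑ x ∈ valid (y :: t'), cnt0 x) =
      ((valid (y :: t')).filter fun x => x.1 = 0).card := by
    rw [Finset.card_filter]
    apply Finset.sum_congr rfl
    intro x _; rfl
  rw [hsum, hval, Finset.filter_erase, pair_filter]
  have hcard2 : ({((0 : Fin (M+2)), true), ((0 : Fin (M+2)), false)} : Finset (LL M)).card = 2 := by
    rw [Finset.card_insert_of_notMem (by simp), Finset.card_singleton]
  by_cases hy : y.1 = 0
  · have hmem : inv2 y ∈ ({((0 : Fin (M+2)), true), ((0 : Fin (M+2)), false)} : Finset (LL M)) := by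
      rcases y with ⟨a, b⟩
      simp only [Finset.mem_insert, Finset.mem_singleton, inv2, Prod.mk.injEq]
      cases b <;> simp_all
    rw [Finset.card_erase_of_mem hmem, hcard2]
    simp [hd0, cnt0, hy]
  · have hmem : inv2 y ∉ ({((0 : Fin (M+2)), true), ((0 : Fin (M+2)), false)} : Finset (LL M)) := by
      rcases y with ⟨a, b⟩
      simp only [Finset.mem_insert, Finset.mem_singleton, inv2, Prod.mk.injEq]
      cases b <;> simp_all
    rw [Finset.erase_eq_of_notMem hmem, hcard2]
    simp [hd0, cnt0, hy]

lemma valid_nil : valid ([] : List (LL M)) = Finset.univ := by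
  ext x; simp [valid]

lemma sphF_one : sphF M 1 = Finset.univ.image (fun x : LL M => [x]) := by
  rw [show (1:ℕ) = 0 + 1 from rfl, sphF]
  rw [show sphF M 0 = {[]} from rfl]
  rw [Finset.singleton_biUnion, valid_nil]

lemma cons_inj : Function.Injective (fun x : LL M => [x]) := by
  intro a b h; simpa using h

lemma sum_cnt0_univ : (∑ x ∈ (Finset.univ : Finset (LL M)), cnt0 x) = 2 := by
  have h : (∑ x ∈ (Finset.univ : Finset (LL M)), cnt0 x) =
      (Finset.univ.filter fun x : LL M => x.1 = 0).card := by
    rw [Finset.card_filter]; rfl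
  rw [h, pair_filter, Finset.card_insert_of_notMem (by simp), Finset.card_singleton]

lemma SAU (M n : ℕ) :
    (sphF M (n+1)).card = (2*(M+2))*(2*M+3)^n ∧
    (∑ l ∈ sphF M (n+1), hd0 l) = 2*(2*M+3)^n ∧
    (∑ l ∈ sphF M (n+1), wt l) = 2*(n+1)*(2*M+3)^n := by
  induction n with
  | zero =>
    rw [sphF_one]
    refine ⟨?_, ?_, ?_⟩
    · rw [Finset.card_image_of_injective _ cons_inj]
      simp [Fintype.card_prod]; ring
    · rw [Finset.sum_image (fun a _ b _ h => cons_inj h)]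
      simpa [hd0] using sum_cnt0_univ
    · rw [Finset.sum_image (fun a _ b _ h => cons_inj h)]
      simpa [wt] using sum_cnt0_univ
  | succ n ih =>
    obtain ⟨ihS, ihA, ihU⟩ := ih
    have hne : ∀ t ∈ sphF M (n+1), t ≠ [] := by
      intro t ht h
      have := (mem_sphF.mp ht).1
      rw [h] at this; simp at this
    have hS : (sphF M (n+2)).card = (2*M+3) * (sphF M (n+1)).card := by
      rw [Finset.card_eq_sum_ones, sum_sphF_succ]
      rw [Finset.sum_congr rfl (fun t ht => by
        rw [← Finset.card_eq_sum_ones, card_valid_of_ne_nil (hne t ht)])]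
      rw [Finset.sum_const, smul_eq_mul, mul_comm]
    have hA2 : (∑ l ∈ sphF M (n+2), hd0 l) + (∑ l ∈ sphF M (n+1), hd0 l)
        = 2 * (sphF M (n+1)).card := by
      rw [sum_sphF_succ, ← Finset.sum_add_distrib]
      rw [Finset.sum_congr rfl (fun t ht => ?_), Finset.sum_const, smul_eq_mul, mul_comm]
      exact sum_cnt0_valid (hne t ht)
    have hU2 : (∑ l ∈ sphF M (n+2), wt l) + (∑ l ∈ sphF M (n+1), hd0 l)
        = 2 * (sphF M (n+1)).card + (2*M+3) * (∑ l ∈ sphF M (n+1), wt l) := by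
      have hrhs : 2 * (sphF M (n+1)).card + (2*M+3) * (∑ l ∈ sphF M (n+1), wt l)
          = ∑ t ∈ sphF M (n+1), (2 + (2*M+3) * wt t) := by
        rw [Finset.sum_add_distrib, Finset.sum_const, smul_eq_mul, Finset.mul_sum, mul_comm]
      rw [hrhs, sum_sphF_succ, ← Finset.sum_add_distrib]
      apply Finset.sum_congr rfl
      intro t ht
      have h3 : (∑ x ∈ valid t, wt (x :: t)) = (∑ x ∈ valid t, cnt0 x) + (2*M+3) * wt t := by
        rw [Finset.sum_congr rfl (fun x _ => wt_cons x t), Finset.sum_add_distrib,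
          Finset.sum_const, smul_eq_mul, card_valid_of_ne_nil (hne t ht)]
      rw [h3]
      have h2 := sum_cnt0_valid (hne t ht)
      omega
    refine ⟨by rw [hS, ihS]; ring, ?_, ?_⟩
    · rw [ihA, ihS] at hA2
      exact Nat.add_right_cancel (hA2.trans (by ring))
    · rw [ihA, ihS, ihU] at hU2
      exact Nat.add_right_cancel (hU2.trans (by ring))

lemma sum_cost (M n : ℕ) :
    ∑ l ∈ sphF M (n+1), (l.length + (M+2) * wt l) = 2*((n+1) * (2*(M+2)*(2*M+3)^n)) := by
  rw [Finset.sum_add_distrib]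
  have h1 : ∑ l ∈ sphF M (n+1), l.length = (n+1) * (sphF M (n+1)).card := by
    rw [Finset.sum_congr rfl (fun l hl => (mem_sphF.mp hl).1), Finset.sum_const, smul_eq_mul,
      mul_comm]
  rw [h1, ← Finset.mul_sum, (SAU M n).1, (SAU M n).2.2]; ring

/-! ### reduced words are chains -/

lemma chain'_of_reduced (l : List (LL M)) (h : FreeGroup.reduce l = l) :
    l.Chain' good := by
  by_contra hc
  rw [List.Chain', List.isChain_iff_getElem] at hc
  push_neg at hc
  obtain ⟨i, hi, hbad⟩ := hc
  rw [good, not_ne_iff] at hbad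
  have h1 : i < l.length := by omega
  have h2 : i + 1 < l.length := by omega
  have hdec : l = l.take i ++ l[i] :: l[i+1] :: l.drop (i+2) := by
    conv_lhs => rw [← List.take_append_drop i l]
    rw [List.drop_eq_getElem_cons h1, List.drop_eq_getElem_cons h2]
  have hbad' : l[i+1] = (l[i].1, !l[i].2) := by
    have h4 : l.get ⟨i+1, h2⟩ = inv2 (l.get ⟨i, h1⟩) := hbad
    simpa [inv2, List.get_eq_getElem] using h4
  rw [hbad'] at hdec
  exact FreeGroup.reduce.not (h.trans hdec)

lemma toWord_mem_sphF {n : ℕ} (w : FreeGroup (Fin (M+2))) (h : wlen w = n) :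
    w.toWord ∈ sphF M n :=
  mem_sphF.mpr ⟨h, chain'_of_reduced _ (FreeGroup.reduce_toWord w)⟩

noncomputable instance sphereFintype (M n : ℕ) :
    Fintype {w : FreeGroup (Fin (M+2)) // wlen w = n} := by
  have h : Finite {w : FreeGroup (Fin (M+2)) // wlen w = n} := by
    apply Finite.of_injective
      (fun w : {w : FreeGroup (Fin (M+2)) // wlen w = n} =>
        (⟨w.1.toWord, toWord_mem_sphF w.1 w.2⟩ : {l // l ∈ sphF M n}))
    intro a b hab
    exact Subtype.ext (FreeGroup.toWord_injective (congrArg Subtype.val hab))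
  exact Fintype.ofFinite _

lemma sum_sphere_le (n : ℕ) (F : List (LL M) → ℕ) :
    (∑ w : {w : FreeGroup (Fin (M+2)) // wlen w = n}, F w.1.toWord) ≤ ∑ l ∈ sphF M n, F l := by
  have hinj : ∀ a ∈ (Finset.univ : Finset {w : FreeGroup (Fin (M+2)) // wlen w = n}),
      ∀ b ∈ Finset.univ, a.1.toWord = b.1.toWord → a = b := by
    intro a _ b _ h
    exact Subtype.ext (FreeGroup.toWord_injective h)
  calc (∑ w : {w : FreeGroup (Fin (M+2)) // wlen w = n}, F w.1.toWord)
      = ∑ l ∈ Finset.univ.image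
          (fun w : {w : FreeGroup (Fin (M+2)) // wlen w = n} => w.1.toWord), F l :=
        (Finset.sum_image hinj).symm
    _ ≤ ∑ l ∈ sphF M n, F l := by
        apply Finset.sum_le_sum_of_subset
        intro l hl
        obtain ⟨w, -, rfl⟩ := Finset.mem_image.mp hl
        exact toWord_mem_sphF w.1 w.2

end S11

namespace S11
open FreeGroup

/-! ### The automorphism `a₀ ↦ a₀ a₁^(M+2)`, `aᵢ ↦ aᵢ` -/

noncomputable def fA (M : ℕ) : FreeGroup (Fin (M+2)) →* FreeGroup (Fin (M+2)) :=
  FreeGroup.lift fun i => if i = 0 then of 0 * (of 1)^(M+2) else of i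

noncomputable def gA (M : ℕ) : FreeGroup (Fin (M+2)) →* FreeGroup (Fin (M+2)) :=
  FreeGroup.lift fun i => if i = 0 then of 0 * ((of 1)^(M+2))⁻¹ else of i

lemma one_ne_zero' (M : ℕ) : (1 : Fin (M+2)) ≠ 0 := by
  intro h; have := congrArg Fin.val h; simp at this

lemma gA_fA (M : ℕ) : (gA M).comp (fA M) = MonoidHom.id _ := by
  apply FreeGroup.ext_hom
  intro a
  by_cases h : a = 0
  · subst h
    simp [fA, gA, _root_.map_mul, _root_.map_pow, one_ne_zero' M, mul_assoc]
  · simp [fA, gA, h]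

lemma fA_gA (M : ℕ) : (fA M).comp (gA M) = MonoidHom.id _ := by
  apply FreeGroup.ext_hom
  intro a
  by_cases h : a = 0
  · subst h
    simp [fA, gA, _root_.map_mul, _root_.map_pow, _root_.map_inv, one_ne_zero' M, mul_assoc]
  · simp [fA, gA, h]

noncomputable def phiA (M : ℕ) : MulAut (FreeGroup (Fin (M+2))) :=
  { toFun := fA M
    invFun := gA M
    left_inv := fun w => DFunLike.congr_fun (gA_fA M) w
    right_inv := fun w => DFunLike.congr_fun (fA_gA M) w
    map_mul' := _root_.map_mul (fA M) }

lemma phiA_apply (M : ℕ) (w : FreeGroup (Fin (M+2))) : phiA M w = fA M w := rfl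

lemma cost_fA (M : ℕ) (a : Fin (M+2)) :
    wlen (fA M (of a)) ≤ if a = 0 then M+3 else 1 := by
  by_cases h : a = 0
  · subst h
    simp only [fA, FreeGroup.lift_apply_of, if_pos rfl]
    calc wlen (of 0 * (of 1)^(M+2)) ≤ wlen ((of 0 : FreeGroup (Fin (M+2)))) + wlen ((of 1 : FreeGroup (Fin (M+2)))^(M+2)) :=
          wlen_mul_le _ _
      _ ≤ 1 + (M+2) := by
          rw [wlen_of, show wlen ((of 1 : FreeGroup (Fin (M+2)))^(M+2)) = M+2 from norm_of_pow 1 (M+2)]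
      _ = M+3 := by ring
  · simp [fA, h, wlen_of]

lemma cost_fA' (M : ℕ) (a : Fin (M+2)) : wlen (fA M (of a)) ≤ M+3 := by
  refine (cost_fA M a).trans ?_
  split <;> omega

lemma hexp_fA0 (M : ℕ) : (hexp (M+2) (fA M (of 0))).toAdd = (M+3 : ℤ) := by
  have h0 : fA M (of 0) = of 0 * (of 1)^(M+2) := by simp [fA]
  rw [h0, _root_.map_mul, _root_.map_pow]
  rw [show hexp (M+2) (of (0 : Fin (M+2))) = Multiplicative.ofAdd (1:ℤ) from FreeGroup.lift_apply_of,
    show hexp (M+2) (of (1 : Fin (M+2))) = Multiplicative.ofAdd (1:ℤ) from FreeGroup.lift_apply_of]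
  rw [toAdd_mul, toAdd_pow, toAdd_ofAdd]
  push_cast; ring

lemma cyclen_fA0 (M : ℕ) : (M+3 : ℕ) ≤ cyclen (fA M (of 0)) := by
  have h := le_cyclen_hexp (fA M (of 0))
  rw [hexp_fA0 M] at h
  have h2 : |(M+3 : ℤ)| = (M+3 : ℤ) := abs_of_nonneg (by positivity)
  rw [h2] at h
  exact_mod_cast h

lemma bdd_ratio (M : ℕ) :
    BddAbove (Set.range fun w : {w : FreeGroup (Fin (M+2)) // w ≠ 1} =>
      (cyclen (phiA M w.1) : ℝ) / (cyclen w.1 : ℝ)) := by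
  refine ⟨(M+3 : ℝ), ?_⟩
  rintro x ⟨w, rfl⟩
  have hpos : (0 : ℝ) < (cyclen w.1 : ℝ) := by
    have := one_le_cyclen w.2
    exact_mod_cast Nat.lt_of_lt_of_le Nat.zero_lt_one this
  rw [div_le_iff₀ hpos]
  have h := cyclen_hom_le (fA M) (cost_fA' M) w.1
  calc (cyclen (phiA M w.1) : ℝ) = ((cyclen (fA M w.1) : ℕ) : ℝ) := by rw [phiA_apply]
    _ ≤ (((M+3) * cyclen w.1 : ℕ) : ℝ) := by exact_mod_cast h
    _ = (M+3 : ℝ) * (cyclen w.1 : ℝ) := by push_cast; ring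

lemma lambdaA_ge (M : ℕ) : (M+3 : ℝ) ≤ LambdaA (fun w => phiA M w) := by
  apply le_ciSup_of_le (bdd_ratio M) ⟨of 0, of_ne_one 0⟩
  rw [phiA_apply, cyclen_one_of]
  rw [Nat.cast_one, div_one]
  exact_mod_cast cyclen_fA0 M

lemma lambdaA_nonneg {N : ℕ} (ψ : FreeGroup (Fin N) → FreeGroup (Fin N)) :
    0 ≤ LambdaA ψ :=
  Real.iSup_nonneg fun w => div_nonneg (Nat.cast_nonneg _) (Nat.cast_nonneg _)

lemma avg_nonneg (N : ℕ) (ψ : FreeGroup (Fin N) → FreeGroup (Fin N)) (n : ℕ) :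
    0 ≤ avg N ψ n :=
  div_nonneg (tsum_nonneg fun w => Nat.cast_nonneg _) (by positivity)

lemma lamA_nonneg (N : ℕ) (ψ : FreeGroup (Fin N) → FreeGroup (Fin N)) :
    0 ≤ lamA N ψ := by
  rw [lamA, Filter.limsup_eq]
  apply Real.sInf_nonneg
  intro a ha
  obtain ⟨n, hn⟩ := ha.exists
  exact le_trans (avg_nonneg N ψ n) hn

lemma list_cost (M : ℕ) (l : List (LL M)) :
    (l.map fun x => wlen (fA M (of x.1))).sum ≤ l.length + (M+2) * wt l := by
  induction l with
  | nil => simp [wt]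
  | cons x t ih =>
    have hx : wlen (fA M (of x.1)) ≤ 1 + (M+2) * cnt0 x := by
      have hc := cost_fA M x.1
      simp only [cnt0]
      by_cases h : x.1 = 0
      · rw [if_pos h] at hc ⊢
        omega
      · rw [if_neg h] at hc ⊢
        omega
    simp only [List.map_cons, List.sum_cons, wt_cons, List.length_cons]
    have hd : (M+2) * (cnt0 x + wt t) = (M+2) * cnt0 x + (M+2) * wt t := by ring
    rw [hd]
    omega

lemma sphere_sum_le (M n : ℕ) :
    (∑ w : {w : FreeGroup (Fin (M+2)) // wlen w = n+1}, cyclen (fA M w.1))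
      ≤ 2*((n+1) * (2*(M+2)*(2*M+3)^n)) := by
  have h1 : ∀ w : {w : FreeGroup (Fin (M+2)) // wlen w = n+1},
      cyclen (fA M w.1) ≤ w.1.toWord.length + (M+2) * wt w.1.toWord := by
    intro w
    refine (cyclen_le_wlen _).trans ?_
    have h := wlen_hom_le_list (fA M) w.1.toWord
    rw [FreeGroup.mk_toWord] at h
    exact h.trans (list_cost M _)
  calc (∑ w : {w : FreeGroup (Fin (M+2)) // wlen w = n+1}, cyclen (fA M w.1))
      ≤ ∑ w : {w : FreeGroup (Fin (M+2)) // wlen w = n+1},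
          (w.1.toWord.length + (M+2) * wt w.1.toWord) := Finset.sum_le_sum fun w _ => h1 w
    _ ≤ ∑ l ∈ sphF M (n+1), (l.length + (M+2) * wt l) :=
        sum_sphere_le (n+1) (fun l => l.length + (M+2) * wt l)
    _ = 2*((n+1) * (2*(M+2)*(2*M+3)^n)) := sum_cost M n

lemma avg_le_two (M n : ℕ) : avg (M+2) (fun w => phiA M w) (n+1) ≤ 2 := by
  unfold avg
  have hden : (2 * (M+2) * (2 * (M+2) - 1) ^ (n + 1 - 1) : ℕ) = 2*(M+2)*(2*M+3)^n := by
    congr 1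
  have hpos : (0 : ℝ) < ((n+1 : ℕ) : ℝ) * ((2 * (M+2) * (2 * (M+2) - 1) ^ (n + 1 - 1) : ℕ) : ℝ) := by
    rw [hden]; positivity
  rw [div_le_iff₀ hpos]
  rw [tsum_fintype]
  have hnum : (∑ w : {w : FreeGroup (Fin (M+2)) // wlen w = n+1}, (cyclen (phiA M w.1) : ℝ))
      = ((∑ w : {w : FreeGroup (Fin (M+2)) // wlen w = n+1}, cyclen (fA M w.1) : ℕ) : ℝ) := by
    rw [Nat.cast_sum]; rfl
  rw [hnum, hden]
  have h := sphere_sum_le M n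
  calc ((∑ w : {w : FreeGroup (Fin (M+2)) // wlen w = n+1}, cyclen (fA M w.1) : ℕ) : ℝ)
      ≤ ((2*((n+1) * (2*(M+2)*(2*M+3)^n)) : ℕ) : ℝ) := by exact_mod_cast h
    _ = 2 * (((n+1 : ℕ) : ℝ) * ((2*(M+2)*(2*M+3)^n : ℕ) : ℝ)) := by push_cast; ring

lemma lamA_le_two (M : ℕ) : lamA (M+2) (fun w => phiA M w) ≤ 2 := by
  rw [lamA, Filter.limsup_eq]
  apply csInf_le
  · refine ⟨0, fun a ha => ?_⟩
    obtain ⟨n, hn⟩ := ha.exists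
    exact le_trans (avg_nonneg _ _ n) hn
  · simp only [Set.mem_setOf_eq]
    filter_upwards [Filter.eventually_ge_atTop 1] with n hn
    obtain ⟨m, rfl⟩ := Nat.exists_eq_add_of_le hn
    have := avg_le_two M m
    simpa [Nat.add_comm] using this

lemma rho_nonneg (n : ℕ) : 0 ≤ rho n :=
  Real.iInf_nonneg fun ψ => div_nonneg (lamA_nonneg _ _) (lambdaA_nonneg _)

lemma rho_le (M : ℕ) : rho (M+2) ≤ 2 / (M+3 : ℝ) := by
  have hbd : BddBelow (Set.range fun φ : MulAut (FreeGroup (Fin (M+2))) =>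
      lamA (M+2) (fun w => φ w) / LambdaA (fun w => φ w)) := by
    refine ⟨0, ?_⟩
    rintro x ⟨ψ, rfl⟩
    exact div_nonneg (lamA_nonneg _ _) (lambdaA_nonneg _)
  calc rho (M+2) ≤ lamA (M+2) (fun w => phiA M w) / LambdaA (fun w => phiA M w) :=
        ciInf_le hbd (phiA M)
    _ ≤ 2 / (M+3 : ℝ) := by
        apply div_le_div₀ (by norm_num) (lamA_le_two M) (by positivity) (lambdaA_ge M)

end S11

/-- `ρ_N ≤ 2/(N+1)` for every `N ≥ 2`; consequently `ρ_N → 0` as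
`N → ∞`, and `N·ρ_N` is bounded above as `N → ∞` (i.e. `ρ_N = O(1/N)`). -/
theorem stmt11 :
    (∀ N : ℕ, 2 ≤ N → rho N ≤ 2 / (N + 1)) ∧
    Filter.Tendsto rho Filter.atTop (nhds 0) ∧
    ∃ C : ℝ, ∀ᶠ N : ℕ in Filter.atTop, (N : ℝ) * rho N ≤ C := by
  have h1 : ∀ N : ℕ, 2 ≤ N → rho N ≤ 2 / ((N : ℝ) + 1) := by
    intro N hN
    obtain ⟨M, rfl⟩ : ∃ M, N = M + 2 := ⟨N - 2, by omega⟩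
    refine (S11.rho_le M).trans (le_of_eq ?_)
    push_cast
    ring_nf
  refine ⟨h1, ?_, ?_⟩
  · have h2 : Filter.Tendsto (fun N : ℕ => 2 / ((N:ℝ)+1)) Filter.atTop (nhds 0) := by
      have h3 := tendsto_one_div_add_atTop_nhds_zero_nat.const_mul (2:ℝ)
      rw [mul_zero] at h3
      refine h3.congr fun n => ?_
      rw [mul_one_div]
    apply tendsto_of_tendsto_of_tendsto_of_le_of_le' tendsto_const_nhds h2
    · exact Filter.Eventually.of_forall fun n => S11.rho_nonneg n
    · filter_upwards [Filter.eventually_ge_atTop 2] with n hn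
      exact h1 n hn
  · refine ⟨2, ?_⟩
    filter_upwards [Filter.eventually_ge_atTop 2] with n hn
    have hr := h1 n hn
    have hn1 : (0:ℝ) < (n:ℝ) + 1 := by positivity
    calc (n:ℝ) * rho n ≤ (n:ℝ) * (2/((n:ℝ)+1)) :=
          mul_le_mul_of_nonneg_left hr (Nat.cast_nonneg n)
      _ ≤ 2 := by
          rw [mul_div_assoc', div_le_iff₀ hn1]
          linarith
end
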